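/- For any real constants k₀, k₁, k₂, on all of Ω = ℝ², the data q(x,y) = e^{x+y}, A(x) = k₁ e^x + k₀, B(y) = k₂ e^y − k₀, Sˣ(x,y) = Sʸ(x,y) = e^{2(x+y)}, and λ = 0 satisfies the full reduced soliton system: (E1) ∂_y Sˣ + ∂_x Sʸ = 4 q_x q_y; (E2) ∂_x Sˣ = 2 q_x²; (E3) ∂_y Sʸ = 2 q_y²; (E4) A''(x) − (Sˣ/q²) A'(x) = B''(y) − (Sʸ/q²) B'(y) (common value denoted w); (E5) −λ/q² = (1/2) w − (q_x A' + q_xx A + q_y B' + q_yy B)/q + (q_x² A + q_y² B)/q² + (Sˣ q_x A + Sʸ q_y B)/q³. -/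

import Mathlib

open Real Set

/-- Partial derivative in the first variable. -/
noncomputable def px (f : ℝ × ℝ → ℝ) : ℝ × ℝ → ℝ :=
  fun p => deriv (fun t => f (t, p.2)) p.1

/-- Partial derivative in the second variable. -/
noncomputable def py (f : ℝ × ℝ → ℝ) : ℝ × ℝ → ℝ :=
  fun p => deriv (fun t => f (p.1, t)) p.2

lemma deriv_exp_add (c x : ℝ) :
    deriv (fun t => Real.exp (t + c)) x = Real.exp (x + c) := by
  have h : HasDerivAt (fun t : ℝ => Real.exp (t + c)) (Real.exp (x + c) * 1) x :=
    ((hasDerivAt_id x).add_const c).exp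
  simpa using h.deriv

lemma deriv_exp_add' (c x : ℝ) :
    deriv (fun t => Real.exp (c + t)) x = Real.exp (c + x) := by
  have h : HasDerivAt (fun t : ℝ => Real.exp (c + t)) (Real.exp (c + x) * 1) x :=
    ((hasDerivAt_id x).const_add c).exp
  simpa using h.deriv

lemma deriv_exp_two_add (c x : ℝ) :
    deriv (fun t => Real.exp (2 * (t + c))) x = 2 * Real.exp (2 * (x + c)) := by
  have h : HasDerivAt (fun t : ℝ => Real.exp (2 * (t + c)))
      (Real.exp (2 * (x + c)) * (2 * 1)) x :=
    (((hasDerivAt_id x).add_const c).const_mul 2).exp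
  simpa [mul_comm] using h.deriv

lemma deriv_exp_two_add' (c x : ℝ) :
    deriv (fun t => Real.exp (2 * (c + t))) x = 2 * Real.exp (2 * (c + x)) := by
  have h : HasDerivAt (fun t : ℝ => Real.exp (2 * (c + t)))
      (Real.exp (2 * (c + x)) * (2 * 1)) x :=
    (((hasDerivAt_id x).const_add c).const_mul 2).exp
  simpa [mul_comm] using h.deriv

lemma deriv_k_exp (k k' x : ℝ) :
    deriv (fun t => k * Real.exp t + k') x = k * Real.exp x := by
  have h : HasDerivAt (fun t : ℝ => k * Real.exp t + k') (k * Real.exp x) x :=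
    ((Real.hasDerivAt_exp x).const_mul k).add_const k'
  exact h.deriv

/-- the data `q = e^{x+y}`, `A(x) = k₁eˣ + k₀`, `B(y) = k₂e^y − k₀`,
`Sˣ = Sʸ = e^{2(x+y)}`, `λ = 0` satisfies the full reduced soliton system on all of ℝ². -/
theorem steady_soliton_conformal_product_of_cigars
    (k₀ k₁ k₂ : ℝ)
    (q Sx Sy : ℝ × ℝ → ℝ) (A B : ℝ → ℝ) (lam : ℝ)
    (hq : ∀ p : ℝ × ℝ, q p = Real.exp (p.1 + p.2))
    (hA : ∀ x : ℝ, A x = k₁ * Real.exp x + k₀)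
    (hB : ∀ y : ℝ, B y = k₂ * Real.exp y - k₀)
    (hSx : ∀ p : ℝ × ℝ, Sx p = Real.exp (2 * (p.1 + p.2)))
    (hSy : ∀ p : ℝ × ℝ, Sy p = Real.exp (2 * (p.1 + p.2)))
    (hlam : lam = 0) :
    ∀ p : ℝ × ℝ,
      (py Sx p + px Sy p = 4 * px q p * py q p) ∧
      (px Sx p = 2 * (px q p) ^ 2) ∧
      (py Sy p = 2 * (py q p) ^ 2) ∧
      (deriv (deriv A) p.1 - Sx p / (q p) ^ 2 * deriv A p.1 =
        deriv (deriv B) p.2 - Sy p / (q p) ^ 2 * deriv B p.2) ∧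
      (-(lam / (q p) ^ 2) =
        (1 / 2) * (deriv (deriv A) p.1 - Sx p / (q p) ^ 2 * deriv A p.1)
        - (px q p * deriv A p.1 + px (px q) p * A p.1
            + py q p * deriv B p.2 + py (py q) p * B p.2) / q p
        + ((px q p) ^ 2 * A p.1 + (py q p) ^ 2 * B p.2) / (q p) ^ 2
        + (Sx p * px q p * A p.1 + Sy p * py q p * B p.2) / (q p) ^ 3) := by
  have hqf : q = fun p : ℝ × ℝ => Real.exp (p.1 + p.2) := funext hq
  have hSxf : Sx = fun p : ℝ × ℝ => Real.exp (2 * (p.1 + p.2)) := funext hSx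
  have hSyf : Sy = fun p : ℝ × ℝ => Real.exp (2 * (p.1 + p.2)) := funext hSy
  have hAf : A = fun x : ℝ => k₁ * Real.exp x + k₀ := funext hA
  have hBf : B = fun y : ℝ => k₂ * Real.exp y - k₀ := funext hB
  subst hqf hSxf hSyf hAf hBf hlam
  have hpxq : ∀ p : ℝ × ℝ, px (fun p : ℝ × ℝ => Real.exp (p.1 + p.2)) p
      = Real.exp (p.1 + p.2) := fun p => deriv_exp_add p.2 p.1
  have hpyq : ∀ p : ℝ × ℝ, py (fun p : ℝ × ℝ => Real.exp (p.1 + p.2)) p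
      = Real.exp (p.1 + p.2) := fun p => deriv_exp_add' p.1 p.2
  have hpxxq : ∀ p : ℝ × ℝ, px (px (fun p : ℝ × ℝ => Real.exp (p.1 + p.2))) p
      = Real.exp (p.1 + p.2) := by
    intro p
    simp only [px, deriv_exp_add]
  have hpyyq : ∀ p : ℝ × ℝ, py (py (fun p : ℝ × ℝ => Real.exp (p.1 + p.2))) p
      = Real.exp (p.1 + p.2) := by
    intro p
    simp only [py, deriv_exp_add']
  have hdA : deriv (fun x : ℝ => k₁ * Real.exp x + k₀) = fun x => k₁ * Real.exp x :=
    funext fun x => deriv_k_exp k₁ k₀ x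
  have hdA2 : ∀ x : ℝ, deriv (fun x : ℝ => k₁ * Real.exp x) x = k₁ * Real.exp x := by
    intro x
    exact ((Real.hasDerivAt_exp x).const_mul k₁).deriv
  have hdB : deriv (fun y : ℝ => k₂ * Real.exp y - k₀) = fun y => k₂ * Real.exp y := by
    funext y
    have h : HasDerivAt (fun t : ℝ => k₂ * Real.exp t - k₀) (k₂ * Real.exp y) y :=
      ((Real.hasDerivAt_exp y).const_mul k₂).sub_const k₀
    exact h.deriv
  have hdB2 : ∀ y : ℝ, deriv (fun y : ℝ => k₂ * Real.exp y) y = k₂ * Real.exp y := by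
    intro y
    exact ((Real.hasDerivAt_exp y).const_mul k₂).deriv
  intro p
  have hpySx : py (fun p : ℝ × ℝ => Real.exp (2 * (p.1 + p.2))) p
      = 2 * Real.exp (2 * (p.1 + p.2)) := deriv_exp_two_add' p.1 p.2
  have hpxSx : px (fun p : ℝ × ℝ => Real.exp (2 * (p.1 + p.2))) p
      = 2 * Real.exp (2 * (p.1 + p.2)) := deriv_exp_two_add p.2 p.1
  have hexp2 : Real.exp (2 * (p.1 + p.2)) = Real.exp (p.1 + p.2) ^ 2 := by
    rw [← Real.exp_nat_mul]; norm_num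
  have hne : Real.exp (p.1 + p.2) ≠ 0 := Real.exp_ne_zero _
  have hexpadd : Real.exp (p.1 + p.2) = Real.exp p.1 * Real.exp p.2 := Real.exp_add _ _
  refine ⟨?_, ?_, ?_, ?_, ?_⟩
  · rw [hpySx, hpxSx, hpxq, hpyq, hexp2]; ring
  · rw [hpxSx, hpxq, hexp2]
  · rw [hpySx, hpyq, hexp2]
  · rw [hdA, hdB]
    simp only [hdA2, hdB2, hexp2]
    field_simp
    ring
  · rw [hdA, hdB]
    simp only [hdA2, hdB2, hpxq, hpyq, hpxxq, hpyyq, hexp2, hexpadd]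
    have h1 : Real.exp p.1 ≠ 0 := Real.exp_ne_zero _
    have h2 : Real.exp p.2 ≠ 0 := Real.exp_ne_zero _
    field_simp
    ring
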